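/- (Main Theorem.) The infimum of the cost values generated by the bidirectional optimisation scheme equals the optimal value of the full bilevel problem: inf_{ℓ ≥ 1} J^ℓ = min_{(z̄,δ) ∈ D̄ × D^δ} J(z̄, δ). In particular, the non-increasing sequence (J^ℓ) converges to the global optimal value J⋆ of the problem min_{(z̄,δ) ∈ D̄ × D^δ} J(z̄, δ). -/

import Mathlib

open scoped BigOperators

/-- Net power that microgrid `κ` receives/provides under exchange strategy `δ`:
`Δ_κ(δ)(n) = Σ_{ν : Edge κ ν} λ_{κν} (δ_{κν}(n) − η_{κν} δ_{νκ}(n))`. -/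
noncomputable def netExchange {M N : ℕ} (Edge : Fin M → Fin M → Prop) [DecidableRel Edge]
    (lam eta : Fin M → Fin M → ℝ)
    (δ : Fin M → Fin M → Fin N → ℝ) (κ : Fin M) : Fin N → ℝ :=
  fun n => ∑ ν ∈ Finset.univ.filter (fun ν => Edge κ ν),
    lam κ ν * (δ κ ν n - eta κ ν * δ ν κ n)

/-- Overall load-shaping cost `J(z̄, δ) = Σ_κ ‖ζ_κ − z̄_κ − Δ_κ(δ)‖₂²`. -/
noncomputable def cost {M N : ℕ} (Edge : Fin M → Fin M → Prop) [DecidableRel Edge]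
    (lam eta : Fin M → Fin M → ℝ) (ζ : Fin M → Fin N → ℝ)
    (z : Fin M → Fin N → ℝ) (δ : Fin M → Fin M → Fin N → ℝ) : ℝ :=
  ∑ κ, ∑ n, (ζ κ n - z κ n - netExchange Edge lam eta δ κ n) ^ 2

/-- Feasible exchange strategies `D^δ`: nonnegativity and the line-limit constraint
`δ_{κν}(n) + δ_{νκ}(n) ≤ 1` for every transmission line. -/
def feasibleExchange {M N : ℕ} (Edge : Fin M → Fin M → Prop)
    (δ : Fin M → Fin M → Fin N → ℝ) : Prop :=
  ∀ κ ν, Edge κ ν → ∀ n, 0 ≤ δ κ ν n ∧ δ κ ν n + δ ν κ n ≤ 1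

/-! ### Auxiliary results on alternating projections between two convex sets -/

open Filter Topology
open scoped RealInnerProductSpace

section AuxProj
variable {F : Type*} [NormedAddCommGroup F] [InnerProductSpace ℝ F]

lemma aux_var_ineq {K : Set F} (hK : Convex ℝ K) {u v : F} (hv : v ∈ K)
    (hmin : ∀ w ∈ K, ‖u - v‖ ≤ ‖u - w‖) : ∀ w ∈ K, ⟪u - v, w - v⟫ ≤ 0 := by
  have h : ‖u - v‖ = ⨅ w : K, ‖u - w‖ := by
    haveI : Nonempty K := ⟨⟨v, hv⟩⟩
    refine le_antisymm (le_ciInf fun w => hmin w w.2) ?_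
    refine ciInf_le ⟨(0:ℝ), ?_⟩ (⟨v, hv⟩ : K)
    rintro x ⟨w, rfl⟩
    exact norm_nonneg _
  exact (norm_eq_iInf_iff_real_inner_le_zero hK hv).mp h

lemma aux_opt_pair {X W : Set F} {p q : F} (h1 : ∀ u ∈ X, ⟪q - p, u - p⟫ ≤ 0)
    (h2 : ∀ v ∈ W, ⟪p - q, v - q⟫ ≤ 0) :
    ∀ u ∈ X, ∀ v ∈ W, ‖p - q‖ ≤ ‖u - v‖ := by
  intro u hu v hv
  have e1 : (0:ℝ) ≤ ⟪p - q, u - p⟫ := by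
    have h := h1 u hu
    rw [← neg_sub q p, inner_neg_left] at *
    linarith
  have e2 : (0:ℝ) ≤ ⟪p - q, q - v⟫ := by
    have h := h2 v hv
    rw [← neg_sub v q, inner_neg_right]
    linarith
  have e3 : ⟪p - q, u - v⟫
      = ⟪p - q, u - p⟫ + ⟪p - q, p - q⟫ + ⟪p - q, q - v⟫ := by
    rw [← inner_add_right, ← inner_add_right]
    congr 1
    abel
  have e4 : ‖p - q‖ ^ 2 ≤ ⟪p - q, u - v⟫ := by
    rw [e3, real_inner_self_eq_norm_sq]
    linarith
  have cs := real_inner_le_norm (p - q) (u - v)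
  rcases (norm_nonneg (p - q)).eq_or_lt with h0 | h0
  · rw [← h0]; exact norm_nonneg _
  · nlinarith [norm_nonneg (u - v)]

set_option maxHeartbeats 1000000 in
lemma aux_alt_proj {X W : Set F} (hXc : IsCompact X) (hXv : Convex ℝ X)
    (hWc : IsCompact W) (hWv : Convex ℝ W) (a b : ℕ → F)
    (ha : ∀ k, a k ∈ X) (hb : ∀ k, b k ∈ W)
    (hbmin : ∀ k, ∀ v ∈ W, ‖a k - b k‖ ≤ ‖a k - v‖)
    (hamin : ∀ k, ∀ u ∈ X, ‖a (k + 1) - b k‖ ≤ ‖u - b k‖) :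
    ∃ L : ℝ, (∃ u ∈ X, ∃ v ∈ W, L = ‖u - v‖) ∧
      (∀ u ∈ X, ∀ v ∈ W, L ≤ ‖u - v‖) ∧
      Tendsto (fun k => ‖a k - b k‖) atTop (𝓝 L) := by
  set d : ℕ → ℝ := fun k => ‖a k - b k‖ with hd
  have danti : Antitone d := antitone_nat_of_succ_le fun k =>
    le_trans (hbmin (k + 1) _ (hb k)) (hamin k _ (ha k))
  have dbdd : BddBelow (Set.range d) := ⟨0, by rintro x ⟨k, rfl⟩; exact norm_nonneg _⟩
  have hL : Tendsto d atTop (𝓝 (⨅ k, d k)) := tendsto_atTop_ciInf danti dbdd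
  set L : ℝ := ⨅ k, d k with hLdef
  have hmem : ∀ k, (a k, b k, a (k + 1), b (k + 1)) ∈ X ×ˢ (W ×ˢ (X ×ˢ W)) :=
    fun k => ⟨ha k, hb k, ha _, hb _⟩
  obtain ⟨⟨p, q, p', q'⟩, hpm, φ, hφ, hconv⟩ :=
    (hXc.prod (hWc.prod (hXc.prod hWc))).tendsto_subseq hmem
  obtain ⟨hp, hq, hp', hq'⟩ := hpm
  have h1 : Tendsto (fun k => a (φ k)) atTop (𝓝 p) :=
    (continuous_fst.tendsto _).comp hconv
  have h2 : Tendsto (fun k => b (φ k)) atTop (𝓝 q) :=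
    ((continuous_fst.comp continuous_snd).tendsto _).comp hconv
  have h3 : Tendsto (fun k => a (φ k + 1)) atTop (𝓝 p') :=
    ((continuous_fst.comp (continuous_snd.comp continuous_snd)).tendsto _).comp hconv
  have h4 : Tendsto (fun k => b (φ k + 1)) atTop (𝓝 q') :=
    ((continuous_snd.comp (continuous_snd.comp continuous_snd)).tendsto _).comp hconv
  have hdφ : Tendsto (fun k => d (φ k)) atTop (𝓝 L) := hL.comp hφ.tendsto_atTop
  have hdφ1 : Tendsto (fun k => d (φ k + 1)) atTop (𝓝 L) :=
    hL.comp ((tendsto_add_atTop_nat 1).comp hφ.tendsto_atTop)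
  have hpq : ‖p - q‖ = L := tendsto_nhds_unique ((h1.sub h2).norm) hdφ
  have hp'q' : ‖p' - q'‖ = L := tendsto_nhds_unique ((h3.sub h4).norm) hdφ1
  have hq'min : ∀ v ∈ W, ‖p' - q'‖ ≤ ‖p' - v‖ := fun v hv =>
    le_of_tendsto_of_tendsto' ((h3.sub h4).norm) ((h3.sub tendsto_const_nhds).norm)
      (fun k => hbmin (φ k + 1) v hv)
  have hp'min : ∀ u ∈ X, ‖p' - q‖ ≤ ‖u - q‖ := fun u hu =>
    le_of_tendsto_of_tendsto' ((h3.sub h2).norm) ((tendsto_const_nhds.sub h2).norm)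
      (fun k => hamin (φ k) u hu)
  have hp'q : ‖p' - q‖ = L := by
    refine le_antisymm (le_trans (hp'min p hp) (le_of_eq hpq)) ?_
    have h := hq'min q hq
    rw [hp'q'] at h
    exact h
  have hqmin' : ∀ v ∈ W, ‖p' - q‖ ≤ ‖p' - v‖ := fun v hv => by
    rw [hp'q, ← hp'q']; exact hq'min v hv
  have c1 : ∀ u ∈ X, ⟪q - p', u - p'⟫ ≤ 0 := by
    refine aux_var_ineq hXv hp' ?_
    intro w hw
    rw [norm_sub_rev q p', norm_sub_rev q w]
    exact hp'min w hw
  have c2 : ∀ v ∈ W, ⟪p' - q, v - q⟫ ≤ 0 := aux_var_ineq hWv hq hqmin'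
  refine ⟨L, ⟨p', hp', q, hq, hp'q.symm⟩, ?_, hL⟩
  intro u hu v hv
  rw [← hp'q]
  exact aux_opt_pair c1 c2 u hu v hv

end AuxProj

/-! ### Euclidean embedding of the microgrid data -/

noncomputable def embed (M N : ℕ) (f : Fin M → Fin N → ℝ) :
    EuclideanSpace ℝ (Fin M × Fin N) :=
  (WithLp.equiv 2 (Fin M × Fin N → ℝ)).symm (fun p => f p.1 p.2)

@[simp] lemma embed_apply {M N : ℕ} (f : Fin M → Fin N → ℝ) (p : Fin M × Fin N) :
    embed M N f p = f p.1 p.2 := rfl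

lemma embed_continuous (M N : ℕ) : Continuous (embed M N) :=
  (PiLp.continuous_toLp 2 _).comp
    (continuous_pi fun p => (continuous_apply p.2).comp (continuous_apply p.1))

lemma euclid_norm_sq {ι : Type*} [Fintype ι] (v : EuclideanSpace ℝ ι) :
    ‖v‖ ^ 2 = ∑ i, v i ^ 2 := by
  rw [EuclideanSpace.norm_eq, Real.sq_sqrt (by positivity)]
  simp [Real.norm_eq_abs, sq_abs]

noncomputable def gmap {M N : ℕ} (Edge : Fin M → Fin M → Prop) [DecidableRel Edge]
    (lam eta : Fin M → Fin M → ℝ) (δ' : Fin M → Fin M → Fin N → ℝ) :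
    EuclideanSpace ℝ (Fin M × Fin N) :=
  embed M N (netExchange Edge lam eta δ')

lemma cost_eq {M N : ℕ} (Edge : Fin M → Fin M → Prop) [DecidableRel Edge]
    (lam eta : Fin M → Fin M → ℝ) (ζ z' : Fin M → Fin N → ℝ)
    (δ' : Fin M → Fin M → Fin N → ℝ) :
    cost Edge lam eta ζ z' δ' =
      ‖embed M N ζ - embed M N z' - gmap Edge lam eta δ'‖ ^ 2 := by
  rw [euclid_norm_sq, Fintype.sum_prod_type]
  rfl

lemma gmap_comb {M N : ℕ} (Edge : Fin M → Fin M → Prop) [DecidableRel Edge]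
    (lam eta : Fin M → Fin M → ℝ) (aa bb : ℝ)
    (δ1 δ2 : Fin M → Fin M → Fin N → ℝ) :
    gmap Edge lam eta (fun κ ν n => aa * δ1 κ ν n + bb * δ2 κ ν n) =
      aa • gmap Edge lam eta δ1 + bb • gmap Edge lam eta δ2 := by
  ext p
  simp only [gmap, PiLp.add_apply, PiLp.smul_apply, smul_eq_mul, embed_apply]
  unfold netExchange
  rw [Finset.mul_sum, Finset.mul_sum, ← Finset.sum_add_distrib]
  exact Finset.sum_congr rfl fun ν _ => by ring

lemma gmap_trunc {M N : ℕ} (Edge : Fin M → Fin M → Prop) [DecidableRel Edge]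
    (hEdgeSymm : ∀ κ ν, Edge κ ν → Edge ν κ)
    (lam eta : Fin M → Fin M → ℝ) (δ' : Fin M → Fin M → Fin N → ℝ) :
    gmap Edge lam eta (fun κ ν n => if Edge κ ν then δ' κ ν n else 0) =
      gmap Edge lam eta δ' := by
  have h : netExchange Edge lam eta (fun κ ν n => if Edge κ ν then δ' κ ν n else 0) =
      netExchange Edge lam eta δ' := by
    funext κ n
    unfold netExchange
    refine Finset.sum_congr rfl ?_
    intro ν hν
    rw [Finset.mem_filter] at hν
    have hE := hν.2
    simp [hE, hEdgeSymm κ ν hE]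
  unfold gmap
  rw [h]

/-- Main Theorem: the infimum of the cost values `J^ℓ` (over `ℓ ≥ 1`) generated by the
bidirectional optimisation scheme equals the optimal value `J⋆` of the full bilevel
problem `min_{(z̄,δ) ∈ D̄ × D^δ} J(z̄, δ)`; in particular the non-increasing sequence
`(J^ℓ)` converges to `J⋆`. -/
theorem bidirectional_scheme_global_convergence
    {M N : ℕ} (hM : 1 ≤ M) (hN : 1 ≤ N)
    (Edge : Fin M → Fin M → Prop) [DecidableRel Edge]
    (hEdgeSymm : ∀ κ ν, Edge κ ν → Edge ν κ)
    (lam eta : Fin M → Fin M → ℝ)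
    (hlamSymm : ∀ κ ν, lam κ ν = lam ν κ)
    (hlamNonneg : ∀ κ ν, 0 ≤ lam κ ν)
    (hetaSymm : ∀ κ ν, eta κ ν = eta ν κ)
    (heta : ∀ κ ν, Edge κ ν → 0 < eta κ ν ∧ eta κ ν ≤ 1)
    (ζ : Fin M → Fin N → ℝ)
    (Dbar : Fin M → Set (Fin N → ℝ))
    (hDne : ∀ κ, (Dbar κ).Nonempty)
    (hDcpt : ∀ κ, IsCompact (Dbar κ))
    (hDcvx : ∀ κ, Convex ℝ (Dbar κ))
    (z : ℕ → Fin M → Fin N → ℝ)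
    (δ : ℕ → Fin M → Fin M → Fin N → ℝ)
    (hz1 : ∀ κ, z 1 κ ∈ Dbar κ)
    -- `δ^ℓ` minimises `J(z̄^ℓ, ·)` over `D^δ`
    (hδmin : ∀ ℓ, 1 ≤ ℓ → feasibleExchange Edge (δ ℓ) ∧
      ∀ δ', feasibleExchange Edge δ' →
        cost Edge lam eta ζ (z ℓ) (δ ℓ) ≤ cost Edge lam eta ζ (z ℓ) δ')
    -- `z̄^{ℓ+1}` minimises `J(·, δ^ℓ)` over `D̄`
    (hzmin : ∀ ℓ, 1 ≤ ℓ → (∀ κ, z (ℓ + 1) κ ∈ Dbar κ) ∧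
      ∀ z', (∀ κ, z' κ ∈ Dbar κ) →
        cost Edge lam eta ζ (z (ℓ + 1)) (δ ℓ) ≤ cost Edge lam eta ζ z' (δ ℓ)) :
    ∃ Jstar : ℝ,
      -- `Jstar` is the global optimal value of the full problem (the minimum is attained)
      IsLeast {c : ℝ | ∃ z' δ', (∀ κ, z' κ ∈ Dbar κ) ∧ feasibleExchange Edge δ' ∧
        c = cost Edge lam eta ζ z' δ'} Jstar ∧
      -- `Jstar` is the infimum of the cost values generated by the scheme
      IsGLB {c : ℝ | ∃ ℓ, 1 ≤ ℓ ∧ c = cost Edge lam eta ζ (z ℓ) (δ ℓ)} Jstar ∧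
      -- and the cost sequence converges to `Jstar`
      Filter.Tendsto (fun ℓ => cost Edge lam eta ζ (z (ℓ + 1)) (δ (ℓ + 1)))
        Filter.atTop (nhds Jstar) := by
  classical
  set Ds : Set (Fin M → Fin N → ℝ) := Set.pi Set.univ Dbar with hDs
  set X : Set (EuclideanSpace ℝ (Fin M × Fin N)) :=
    (fun z' => embed M N ζ - embed M N z') '' Ds with hXdef
  set K : Set (Fin M → Fin M → Fin N → ℝ) :=
    {δ' | (∀ κ ν n, δ' κ ν n ∈ Set.Icc (0:ℝ) 1) ∧
      ∀ κ ν, Edge κ ν → ∀ n, δ' κ ν n + δ' ν κ n ≤ 1} with hKdef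
  set W : Set (EuclideanSpace ℝ (Fin M × Fin N)) := gmap Edge lam eta '' K with hWdef
  have sqle : ∀ x y : ℝ, 0 ≤ x → 0 ≤ y → x ^ 2 ≤ y ^ 2 → x ≤ y := by
    intro x y hx hy h; nlinarith
  have hKfeas : ∀ δ' ∈ K, feasibleExchange Edge δ' := by
    rintro δ' ⟨h1, h2⟩ κ ν hE n
    exact ⟨(h1 κ ν n).1, h2 κ ν hE n⟩
  have hWmem : ∀ δ', feasibleExchange Edge δ' → gmap Edge lam eta δ' ∈ W := by
    intro δ' hf
    refine ⟨fun κ ν n => if Edge κ ν then δ' κ ν n else 0, ⟨?_, ?_⟩,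
      gmap_trunc Edge hEdgeSymm lam eta δ'⟩
    · intro κ ν n
      by_cases hE : Edge κ ν
      · have h1 := hf κ ν hE n
        have h2 := hf ν κ (hEdgeSymm κ ν hE) n
        simp only [hE, if_true, Set.mem_Icc]
        exact ⟨h1.1, by linarith [h2.1, h1.2]⟩
      · simp [hE]
    · intro κ ν hE n
      simp only [hE, hEdgeSymm κ ν hE, if_true]
      exact (hf κ ν hE n).2
  have hXcvx : Convex ℝ X := by
    rintro x ⟨z1, hz1', rfl⟩ y ⟨z2, hz2', rfl⟩ aa bb haa hbb hab
    refine ⟨fun κ => aa • z1 κ + bb • z2 κ,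
      fun κ _ => hDcvx κ (hz1' κ (Set.mem_univ κ)) (hz2' κ (Set.mem_univ κ)) haa hbb hab, ?_⟩
    ext p
    simp only [PiLp.add_apply, PiLp.smul_apply, PiLp.sub_apply, smul_eq_mul, embed_apply,
      Pi.add_apply, Pi.smul_apply]
    linear_combination (-(ζ p.1 p.2)) * hab
  have hXcpt : IsCompact X :=
    (isCompact_univ_pi hDcpt).image (continuous_const.sub (embed_continuous M N))
  have hev : ∀ (κ ν : Fin M) (n : Fin N),
      Continuous fun δ' : Fin M → Fin M → Fin N → ℝ => δ' κ ν n :=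
    fun κ ν n => (continuous_apply n).comp ((continuous_apply ν).comp (continuous_apply κ))
  have hWcvx : Convex ℝ W := by
    rintro x ⟨δ1, hδ1, rfl⟩ y ⟨δ2, hδ2, rfl⟩ aa bb haa hbb hab
    refine ⟨fun κ ν n => aa * δ1 κ ν n + bb * δ2 κ ν n, ⟨?_, ?_⟩,
      gmap_comb Edge lam eta aa bb δ1 δ2⟩
    · intro κ ν n
      have h := (convex_Icc (0:ℝ) 1) (hδ1.1 κ ν n) (hδ2.1 κ ν n) haa hbb hab
      simpa [smul_eq_mul] using h
    · intro κ ν hE n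
      have h1 := hδ1.2 κ ν hE n
      have h2 := hδ2.2 κ ν hE n
      dsimp only
      nlinarith [mul_le_mul_of_nonneg_left h1 haa, mul_le_mul_of_nonneg_left h2 hbb]
  have hA : IsCompact {δ' : Fin M → Fin M → Fin N → ℝ |
      ∀ κ ν n, δ' κ ν n ∈ Set.Icc (0:ℝ) 1} := by
    have e : {δ' : Fin M → Fin M → Fin N → ℝ | ∀ κ ν n, δ' κ ν n ∈ Set.Icc (0:ℝ) 1} =
        Set.pi Set.univ (fun _ : Fin M => Set.pi Set.univ fun _ : Fin M =>
          Set.pi Set.univ fun _ : Fin N => Set.Icc (0:ℝ) 1) := by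
      ext δ'
      simp [Set.mem_pi, Set.mem_Icc, Pi.le_def, forall_and]
    rw [e]
    exact isCompact_univ_pi fun _ => isCompact_univ_pi fun _ =>
      isCompact_univ_pi fun _ => isCompact_Icc
  have hB : IsClosed {δ' : Fin M → Fin M → Fin N → ℝ |
      ∀ κ ν, Edge κ ν → ∀ n, δ' κ ν n + δ' ν κ n ≤ 1} := by
    have e : {δ' : Fin M → Fin M → Fin N → ℝ | ∀ κ ν, Edge κ ν → ∀ n,
        δ' κ ν n + δ' ν κ n ≤ 1} =
        ⋂ κ, ⋂ ν, ⋂ n, {δ' : Fin M → Fin M → Fin N → ℝ |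
          Edge κ ν → δ' κ ν n + δ' ν κ n ≤ 1} := by
      ext δ'
      simp only [Set.mem_iInter, Set.mem_setOf_eq]
      tauto
    rw [e]
    refine isClosed_iInter fun κ => isClosed_iInter fun ν => isClosed_iInter fun n => ?_
    by_cases hE : Edge κ ν
    · simp only [hE, true_implies]
      exact isClosed_le ((hev κ ν n).add (hev ν κ n)) continuous_const
    · convert isClosed_univ
      ext δ'
      simp [hE]
  have hKcpt : IsCompact K := hA.inter_right hB
  have hgcont : Continuous
      (gmap Edge lam eta : (Fin M → Fin M → Fin N → ℝ) → EuclideanSpace ℝ (Fin M × Fin N)) := by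
    unfold gmap embed
    refine (PiLp.continuous_toLp 2 _).comp (continuous_pi fun p => ?_)
    unfold netExchange
    exact continuous_finset_sum _ fun ν _ =>
      continuous_const.mul ((hev p.1 ν p.2).sub (continuous_const.mul (hev ν p.1 p.2)))
  have hWcpt : IsCompact W := hKcpt.image hgcont
  have hzDs : ∀ k : ℕ, z (k + 1) ∈ Ds := by
    intro k
    cases k with
    | zero => exact fun κ _ => hz1 κ
    | succ k => exact fun κ _ => (hzmin (k + 1) (by omega)).1 κ
  have ha : ∀ k : ℕ, embed M N ζ - embed M N (z (k + 1)) ∈ X :=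
    fun k => ⟨z (k + 1), hzDs k, rfl⟩
  have hb : ∀ k : ℕ, gmap Edge lam eta (δ (k + 1)) ∈ W :=
    fun k => hWmem _ (hδmin (k + 1) (by omega)).1
  have hbmin : ∀ k : ℕ, ∀ v ∈ W,
      ‖embed M N ζ - embed M N (z (k + 1)) - gmap Edge lam eta (δ (k + 1))‖ ≤
        ‖embed M N ζ - embed M N (z (k + 1)) - v‖ := by
    rintro k v ⟨δ'', hδ'', rfl⟩
    have h := (hδmin (k + 1) (by omega)).2 δ'' (hKfeas _ hδ'')
    rw [cost_eq, cost_eq] at h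
    exact sqle _ _ (norm_nonneg _) (norm_nonneg _) h
  have hamin : ∀ k : ℕ, ∀ u ∈ X,
      ‖embed M N ζ - embed M N (z (k + 1 + 1)) - gmap Edge lam eta (δ (k + 1))‖ ≤
        ‖u - gmap Edge lam eta (δ (k + 1))‖ := by
    rintro k u ⟨z'', hz'', rfl⟩
    have h := (hzmin (k + 1) (by omega)).2 z'' (fun κ => hz'' κ (Set.mem_univ κ))
    rw [cost_eq, cost_eq] at h
    exact sqle _ _ (norm_nonneg _) (norm_nonneg _) h
  obtain ⟨L, ⟨u0, hu0, v0, hv0, hLeq⟩, hLlb, hLtend⟩ :=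
    aux_alt_proj hXcpt hXcvx hWcpt hWcvx
      (fun k => embed M N ζ - embed M N (z (k + 1)))
      (fun k => gmap Edge lam eta (δ (k + 1))) ha hb hbmin hamin
  have hL0 : 0 ≤ L := hLeq ▸ norm_nonneg _
  refine ⟨L ^ 2, ⟨?_, ?_⟩, ⟨?_, ?_⟩, ?_⟩
  · obtain ⟨z0, hz0, rfl⟩ := hu0
    obtain ⟨δ0, hδ0, rfl⟩ := hv0
    exact ⟨z0, δ0, fun κ => hz0 κ (Set.mem_univ κ), hKfeas _ hδ0, by rw [cost_eq, hLeq]⟩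
  · rintro c ⟨z', δ', hz', hδ', rfl⟩
    rw [cost_eq]
    exact pow_le_pow_left₀ hL0 (hLlb _ ⟨z', fun κ _ => hz' κ, rfl⟩ _ (hWmem δ' hδ')) 2
  · rintro c ⟨ℓ, hℓ, rfl⟩
    obtain ⟨k, rfl⟩ : ∃ k, ℓ = k + 1 := ⟨ℓ - 1, by omega⟩
    rw [cost_eq]
    exact pow_le_pow_left₀ hL0 (hLlb _ (ha k) _ (hb k)) 2
  · intro c hc
    refine ge_of_tendsto' (hLtend.pow 2) fun k => hc
      ⟨k + 1, by omega, (cost_eq Edge lam eta ζ (z (k + 1)) (δ (k + 1))).symm⟩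
  · have e : (fun ℓ => cost Edge lam eta ζ (z (ℓ + 1)) (δ (ℓ + 1))) =
        fun k => ‖embed M N ζ - embed M N (z (k + 1)) - gmap Edge lam eta (δ (k + 1))‖ ^ 2 := by
      funext k
      exact cost_eq Edge lam eta ζ (z (k + 1)) (δ (k + 1))
    rw [e]
    exact hLtend.pow 2
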